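/- For a vector space X in M_d(C)⊗M_d(C) that is LDOI parametrized by (A,B,C), and unit vectors v, w ∈ C^d, the product expectation value satisfies ⟨v⊗w| X |v⊗w⟩ = ⟨v⊙conj(v)| A |w⊙conj(w)⟩ + ⟨v⊙w| (B − diag B) |v⊙w⟩ + ⟨v⊙conj(w)| (C − diag C) |v⊙conj(w)⟩, where ⊙ is the entrywise product of vectors. -/

import Mathlib

open Matrix

/-- The LDOI matrix `X^{(3)}_{(A,B,C)} = Σ_{i,j} A_{ij}|ij⟩⟨ij| + Σ_{i≠j} B_{ij}|ii⟩⟨jj|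
  + Σ_{i≠j} C_{ij}|ij⟩⟨ji|`. -/
def X3 {d : ℕ} {R : Type*} [CommRing R] (A B C : Matrix (Fin d) (Fin d) R) :
    Matrix (Fin d × Fin d) (Fin d × Fin d) R :=
  Matrix.of fun p q =>
    (if p.1 = q.1 ∧ p.2 = q.2 then A p.1 p.2 else 0) +
    (if p.1 = p.2 ∧ q.1 = q.2 ∧ p.1 ≠ q.1 then B p.1 q.1 else 0) +
    (if p.1 = q.2 ∧ p.2 = q.1 ∧ p.1 ≠ p.2 then C p.1 p.2 else 0)

/-- The realignment `(X^R)_{ij,kl} = X_{ik,jl}`. -/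
def realign {d : ℕ} {R : Type*} [CommRing R]
    (X : Matrix (Fin d × Fin d) (Fin d × Fin d) R) :
    Matrix (Fin d × Fin d) (Fin d × Fin d) R :=
  Matrix.of fun p q => X (p.1, q.1) (p.2, q.2)

/-- The partial transpose `(X^Γ)_{ij,kl} = X_{il,kj}`. -/
def ptrans {d : ℕ} {R : Type*} [CommRing R]
    (X : Matrix (Fin d × Fin d) (Fin d × Fin d) R) :
    Matrix (Fin d × Fin d) (Fin d × Fin d) R :=
  Matrix.of fun p q => X (p.1, q.2) (q.1, p.2)

/-- The triple (A,B,C) has equal diagonals. -/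
def EqDiag {d : ℕ} {R : Type*} [CommRing R] (A B C : Matrix (Fin d) (Fin d) R) : Prop :=
  ∀ i, A i i = B i i ∧ B i i = C i i

/-- product expectation values (local numerical range) of LDOI matrices. -/
theorem stmt_19 {d : ℕ} (A B C : Matrix (Fin d) (Fin d) ℂ) (h : EqDiag A B C)
    (v w : Fin d → ℂ)
    (hv : ∑ i, ‖v i‖ ^ 2 = 1) (hw : ∑ i, ‖w i‖ ^ 2 = 1) :
    ∑ p : Fin d × Fin d, ∑ q : Fin d × Fin d,
        starRingEnd ℂ (v p.1 * w p.2) * X3 A B C p q * (v q.1 * w q.2) =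
      (∑ i, ∑ j, starRingEnd ℂ (v i * starRingEnd ℂ (v i)) * A i j *
          (w j * starRingEnd ℂ (w j))) +
      (∑ i, ∑ j, starRingEnd ℂ (v i * w i) *
          (B - Matrix.diagonal fun k => B k k) i j * (v j * w j)) +
      (∑ i, ∑ j, starRingEnd ℂ (v i * starRingEnd ℂ (w i)) *
          (C - Matrix.diagonal fun k => C k k) i j * (v j * starRingEnd ℂ (w j))) := by
  simp only [X3, Matrix.of_apply, mul_add, add_mul, Finset.sum_add_distrib,
    Fintype.sum_prod_type, mul_ite, ite_mul, mul_zero, zero_mul,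
    Matrix.sub_apply, Matrix.diagonal_apply, ite_and, Finset.sum_ite_eq,
    Finset.sum_ite_eq', Finset.mem_univ, if_true, Finset.sum_ite_irrel,
    Finset.sum_const_zero]
  congr 1
  · congr 1
    · refine Finset.sum_congr rfl fun i _ => Finset.sum_congr rfl fun j _ => ?_
      simp only [_root_.map_mul, Complex.conj_conj]
      ring
    · refine Finset.sum_congr rfl fun i _ => Finset.sum_congr rfl fun j _ => ?_
      rcases eq_or_ne i j with rfl | hij
      · simp
      · simp [hij]
  · refine Finset.sum_congr rfl fun i _ => Finset.sum_congr rfl fun j _ => ?_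
    rcases eq_or_ne i j with rfl | hij
    · simp
    · simp only [hij, if_neg, sub_zero, _root_.map_mul, Complex.conj_conj, ne_eq,
        not_false_iff, if_true]
      ring
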